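/- arXiv:2208.08365 — 4 statements merged into one kernel-verified Lean document; each statement's English description precedes it below -/
import Mathlib

section
/- Let k be an algebraically closed field of characteristic zero, μ ∈ k[[z]] a non-constant formal power series, and a, b ∈ k*. If μ ∘ (az) = (bz) ∘ μ, i.e., μ(az) = b·μ(z), then b = a^r where r is the order of μ; moreover, either μ = c·z^r for some c ∈ k*, or a is a root of unity. -/
open PowerSeries

/-- Composition (substitution) `comp A B = A ∘ B` of formal power series,
the standard coefficient formula, well-behaved when `B` has zero constant term. -/
noncomputable def comp {k : Type*} [Field k] (A B : PowerSeries k) : PowerSeries k :=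
  PowerSeries.mk fun n =>
    ∑ i ∈ Finset.range (n + 1), (PowerSeries.coeff i A) * (PowerSeries.coeff n (B ^ i))

/-- `iterComp φ j` is the `j`-fold compositional iterate `φ^{∘j}` (with `φ^{∘0} = z`). -/
noncomputable def iterComp {k : Type*} [Field k] (φ : PowerSeries k) : ℕ → PowerSeries k
  | 0 => PowerSeries.X
  | n + 1 => comp φ (iterComp φ n)

/-- Composition of a list of power series: `compList [A₁, …, A_r] = A₁ ∘ ⋯ ∘ A_r`. -/
noncomputable def compList {k : Type*} [Field k] : List (PowerSeries k) → PowerSeries k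
  | [] => PowerSeries.X
  | a :: t => comp a (compList t)

theorem stmt1 {k : Type*} [Field k] [IsAlgClosed k] [CharZero k]
    (μ : PowerSeries k) (hμ : ∀ c : k, μ ≠ C c)
    {a b : k} (ha : a ≠ 0) (hb : b ≠ 0)
    (h : comp μ (C a * X) = C b * μ) :
    ∃ r : ℕ, μ.order = (r : ℕ∞) ∧ b = a ^ r ∧
      ((∃ c : k, c ≠ 0 ∧ μ = C c * X ^ r) ∨ ∃ m : ℕ, 0 < m ∧ a ^ m = 1) := by
  have hkey : ∀ n : ℕ, coeff n μ * a ^ n = b * coeff n μ := by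
    intro n
    have := congrArg (coeff n) h
    rw [comp, coeff_mk, coeff_C_mul] at this
    rw [← this]
    rw [Finset.sum_congr rfl (fun i _ => by
      rw [mul_pow, ← map_pow, coeff_C_mul, coeff_X_pow])]
    simp [Finset.sum_ite_eq', mul_comm]
  have hne : μ ≠ 0 := hμ 0 ∘ (by simp [·])
  have hfin : μ.order < ⊤ := order_finite_iff_ne_zero.mpr hne
  obtain ⟨r, hr⟩ : ∃ r : ℕ, μ.order = (r : ℕ∞) := by
    cases hor : μ.order with
    | top => exact absurd hor (WithTop.lt_top_iff_ne_top.mp hfin)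
    | coe r => exact ⟨r, rfl⟩
  obtain ⟨hr1, hr2⟩ := order_eq_nat.mp hr
  refine ⟨r, hr, ?_, ?_⟩
  · have := hkey r
    rw [mul_comm b] at this
    exact (mul_left_cancel₀ hr1 this).symm
  · by_cases hX : ∀ n, n ≠ r → coeff n μ = 0
    · left
      refine ⟨coeff r μ, hr1, ?_⟩
      ext n
      rw [coeff_C_mul, coeff_X_pow]
      by_cases hn : n = r
      · simp [hn]
      · simp [hn, hX n hn]
    · right
      push_neg at hX
      obtain ⟨n, hn, hn0⟩ := hX
      have hnr : r < n := by
        rcases lt_or_gt_of_ne hn with h' | h'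
        · exact absurd (hr2 n h') hn0
        · exact h'
      have han : a ^ n = a ^ r := by
        have h1 := hkey n
        have h2 : b = a ^ r := by
          have := hkey r
          rw [mul_comm b] at this
          exact (mul_left_cancel₀ hr1 this).symm
        rw [h2, mul_comm (a^r)] at h1
        exact mul_left_cancel₀ hn0 h1
      refine ⟨n - r, Nat.sub_pos_of_lt hnr, ?_⟩
      have : a ^ n = a ^ (n - r) * a ^ r := by
        rw [← pow_add, Nat.sub_add_cancel hnr.le]
      have har : a ^ r ≠ 0 := pow_ne_zero _ ha
      rw [this] at han
      nth_rewrite 2 [← one_mul (a ^ r)] at han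
      exact mul_right_cancel₀ har han
end

section
/- Let k be an algebraically closed field of characteristic zero and n ≥ 2. Non-constant formal power series μ₁, μ₂ ∈ k[[z]] satisfy μ₁(z)^n = μ₂(z^n) (i.e., z^n ∘ μ₁ = μ₂ ∘ z^n) if and only if there exist R ∈ k[[z]] and an integer r with 0 ≤ r ≤ n−1 such that μ₁(z) = z^r·R(z^n) and μ₂(z) = z^r·R(z)^n. -/
open PowerSeries

section
variable {k : Type*} [Field k]

noncomputable def Ee (n : ℕ) (A : PowerSeries k) : PowerSeries k :=
  PowerSeries.mk fun m => if n ∣ m then coeff (m / n) A else 0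

lemma coeff_Ee (n : ℕ) (A : PowerSeries k) (m : ℕ) :
    coeff m (Ee n A) = if n ∣ m then coeff (m / n) A else 0 := coeff_mk _ _

lemma comp_X_pow {n : ℕ} (hn : 0 < n) (A : PowerSeries k) : comp A (X ^ n) = Ee n A := by
  ext m
  rw [coeff_Ee, comp, coeff_mk]
  have hco : ∀ i, coeff m (((X:PowerSeries k)^n)^i) = if m = n * i then 1 else 0 := by
    intro i; rw [← pow_mul, coeff_X_pow]
  simp_rw [hco]
  by_cases h : n ∣ m
  · obtain ⟨c, rfl⟩ := h
    rw [Finset.sum_eq_single_of_mem c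
      (Finset.mem_range.2 (by have := Nat.le_mul_of_pos_left c hn; omega))]
    · simp [Nat.mul_div_cancel_left c hn]
    · intro b _ hb
      have : ¬ (n * c = n * b) := fun h => hb (Nat.eq_of_mul_eq_mul_left hn h.symm)
      simp [this]
  · rw [if_neg h]
    apply Finset.sum_eq_zero
    intro i _
    have : ¬ (m = n * i) := fun hh => h ⟨i, hh⟩
    simp [this]

lemma Ee_mul {n : ℕ} (hn : 0 < n) (A B : PowerSeries k) :
    Ee n (A * B) = Ee n A * Ee n B := by
  ext m
  rw [coeff_Ee]
  by_cases h : n ∣ m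
  · obtain ⟨c, rfl⟩ := h
    rw [if_pos ⟨c, rfl⟩, Nat.mul_div_cancel_left c hn, coeff_mul, coeff_mul]
    rw [← Finset.sum_filter_add_sum_filter_not (Finset.HasAntidiagonal.antidiagonal (n*c))
      (fun p => n ∣ p.1)]
    have h2 : ∑ p ∈ (Finset.HasAntidiagonal.antidiagonal (n*c)).filter (fun p => ¬ n ∣ p.1),
        coeff p.1 (Ee n A) * coeff p.2 (Ee n B) = 0 := by
      apply Finset.sum_eq_zero
      intro p hp
      rw [Finset.mem_filter] at hp
      rw [coeff_Ee, if_neg hp.2, zero_mul]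
    rw [h2, add_zero]
    apply Finset.sum_nbij' (i := fun q : ℕ × ℕ => (n * q.1, n * q.2))
      (j := fun p : ℕ × ℕ => (p.1 / n, p.2 / n))
    · intro q hq
      rw [Finset.HasAntidiagonal.mem_antidiagonal] at hq
      rw [Finset.mem_filter, Finset.HasAntidiagonal.mem_antidiagonal]
      exact ⟨by rw [← Nat.mul_add, hq], dvd_mul_right n q.1⟩
    · intro p hp
      rw [Finset.mem_filter, Finset.HasAntidiagonal.mem_antidiagonal] at hp
      obtain ⟨a, ha⟩ := hp.2
      have hdb : n ∣ p.2 := by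
        have : p.2 = n * c - n * a := by omega
        exact this ▸ Nat.dvd_sub (dvd_mul_right n c) (dvd_mul_right n a)
      obtain ⟨b, hb⟩ := hdb
      rw [Finset.HasAntidiagonal.mem_antidiagonal]
      have hy : n * a + n * b = n * c := by rw [← ha, ← hb]; exact hp.1
      simp only [ha, hb, Nat.mul_div_cancel_left _ hn]
      exact Nat.eq_of_mul_eq_mul_left hn (by rw [Nat.mul_add]; omega)
    · intro q hq
      simp [Nat.mul_div_cancel_left _ hn]
    · intro p hp
      rw [Finset.mem_filter, Finset.HasAntidiagonal.mem_antidiagonal] at hp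
      obtain ⟨a, ha⟩ := hp.2
      have hdb : n ∣ p.2 := by
        have : p.2 = n * c - n * a := by omega
        exact this ▸ Nat.dvd_sub (dvd_mul_right n c) (dvd_mul_right n a)
      obtain ⟨b, hb⟩ := hdb
      simp only [ha, hb, Nat.mul_div_cancel_left _ hn]
      rw [← ha, ← hb]
    · intro q hq
      rw [coeff_Ee, coeff_Ee, if_pos (dvd_mul_right n q.1), if_pos (dvd_mul_right n q.2),
        Nat.mul_div_cancel_left _ hn, Nat.mul_div_cancel_left _ hn]
  · rw [if_neg h, coeff_mul]
    symm
    apply Finset.sum_eq_zero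
    intro p hp
    rw [Finset.HasAntidiagonal.mem_antidiagonal] at hp
    by_cases h1 : n ∣ p.1
    · by_cases h2 : n ∣ p.2
      · exact absurd (hp ▸ Nat.dvd_add h1 h2) h
      · rw [coeff_Ee (A := B), if_neg h2, mul_zero]
    · rw [coeff_Ee, if_neg h1, zero_mul]

lemma Ee_one {n : ℕ} : Ee n (1 : PowerSeries k) = 1 := by
  ext m
  rw [coeff_Ee]
  by_cases h : n ∣ m
  · rw [if_pos h, coeff_one, coeff_one]
    have hmm := Nat.mul_div_cancel' h
    have hiff : m / n = 0 ↔ m = 0 := by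
      constructor
      · intro h0; rw [h0, Nat.mul_zero] at hmm; omega
      · rintro rfl; simp
    simp only [hiff]
  · rw [if_neg h, coeff_one, if_neg (by rintro rfl; exact h (dvd_zero n))]

lemma Ee_pow {n : ℕ} (hn : 0 < n) (A : PowerSeries k) (j : ℕ) :
    Ee n (A ^ j) = (Ee n A) ^ j := by
  induction j with
  | zero => simpa using Ee_one
  | succ j ih => rw [pow_succ, pow_succ, Ee_mul hn, ih]

lemma Ee_X_pow {n : ℕ} (hn : 0 < n) (r : ℕ) :
    Ee n ((X : PowerSeries k) ^ r) = X ^ (n * r) := by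
  ext m
  rw [coeff_Ee]
  by_cases h : n ∣ m
  · obtain ⟨c, rfl⟩ := h
    rw [if_pos ⟨c, rfl⟩, Nat.mul_div_cancel_left c hn, coeff_X_pow, coeff_X_pow]
    by_cases hc : c = r
    · simp [hc]
    · rw [if_neg hc, if_neg (fun hh => hc (Nat.eq_of_mul_eq_mul_left hn hh))]
  · rw [if_neg h, coeff_X_pow, if_neg (by rintro rfl; exact h (dvd_mul_right n r))]

lemma Ee_inj {n : ℕ} (hn : 0 < n) {A B : PowerSeries k} (h : Ee n A = Ee n B) : A = B := by
  ext i
  have := congrArg (coeff (n * i)) h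
  rwa [coeff_Ee, coeff_Ee, if_pos ⟨i, rfl⟩, if_pos ⟨i, rfl⟩,
    Nat.mul_div_cancel_left i hn] at this

end

section
variable {k : Type*} [Field k]

lemma coeff_mul_eq_zero_of_lt {A B : PowerSeries k} {u v : ℕ}
    (hA : ∀ i < u, coeff i A = 0) (hB : ∀ j < v, coeff j B = 0)
    {l : ℕ} (hl : l < u + v) : coeff l (A * B) = 0 := by
  rw [coeff_mul]
  apply Finset.sum_eq_zero
  intro p hp
  rw [Finset.HasAntidiagonal.mem_antidiagonal] at hp
  by_cases h : p.1 < u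
  · rw [hA _ h, zero_mul]
  · rw [hB _ (by omega), mul_zero]

lemma coeff_mul_orders {A B : PowerSeries k} {u v : ℕ}
    (hA : ∀ i < u, coeff i A = 0) (hB : ∀ j < v, coeff j B = 0) :
    coeff (u + v) (A * B) = coeff u A * coeff v B := by
  rw [coeff_mul]
  rw [Finset.sum_eq_single (u, v)]
  · intro p hp hne
    rw [Finset.HasAntidiagonal.mem_antidiagonal] at hp
    by_cases h : p.1 < u
    · rw [hA _ h, zero_mul]
    · by_cases h2 : p.2 < v
      · rw [hB _ h2, mul_zero]
      · exact absurd (Prod.ext (by omega) (by omega) : p = (u, v)) hne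
  · intro h
    exact absurd (Finset.HasAntidiagonal.mem_antidiagonal.2 (by simp)) h

lemma coeff_pow_lt {A : PowerSeries k} {u : ℕ}
    (hA : ∀ i < u, coeff i A = 0) (j : ℕ) :
    ∀ l < j * u, coeff l (A ^ j) = 0 := by
  induction j with
  | zero => intro l hl; omega
  | succ j ih =>
    intro l hl
    rw [pow_succ]
    exact coeff_mul_eq_zero_of_lt ih hA (by rw [Nat.succ_mul] at hl; omega)

lemma coeff_pow_orders {A : PowerSeries k} {u : ℕ}
    (hA : ∀ i < u, coeff i A = 0) (j : ℕ) :
    coeff (j * u) (A ^ j) = (coeff u A) ^ j := by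
  induction j with
  | zero => simp
  | succ j ih =>
    rw [pow_succ, pow_succ, Nat.succ_mul, coeff_mul_orders (coeff_pow_lt hA j) hA, ih]

lemma coeff_mul_residue {n s s' : ℕ} {A B : PowerSeries k}
    (hA : ∀ i, i % n ≠ s % n → coeff i A = 0)
    (hB : ∀ j, j % n ≠ s' % n → coeff j B = 0) :
    ∀ l, l % n ≠ (s + s') % n → coeff l (A * B) = 0 := by
  intro l hl
  rw [coeff_mul]
  apply Finset.sum_eq_zero
  intro p hp
  rw [Finset.HasAntidiagonal.mem_antidiagonal] at hp
  by_cases h1 : p.1 % n = s % n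
  · by_cases h2 : p.2 % n = s' % n
    · exfalso
      apply hl
      rw [← hp, Nat.add_mod, h1, h2, ← Nat.add_mod]
    · rw [hB _ h2, mul_zero]
  · rw [hA _ h1, zero_mul]

lemma coeff_pow_residue {n s : ℕ} (hn : 0 < n) {A : PowerSeries k}
    (hA : ∀ i, i % n ≠ s % n → coeff i A = 0) (j : ℕ) :
    ∀ l, l % n ≠ (j * s) % n → coeff l (A ^ j) = 0 := by
  induction j with
  | zero =>
    intro l hl
    rw [pow_zero, coeff_one, if_neg]
    rintro rfl
    simp at hl
  | succ j ih =>
    intro l hl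
    rw [pow_succ]
    exact coeff_mul_residue ih hA l (by rwa [Nat.succ_mul] at hl)

end

section
variable {k : Type*} [Field k] [CharZero k]

lemma key_residue {n : ℕ} (hn : 2 ≤ n) {f : PowerSeries k}
    (hsupp : ∀ t, ¬ n ∣ t → coeff t (f ^ n) = 0) {d : ℕ}
    (hd : coeff d f ≠ 0) (hdmin : ∀ i < d, coeff i f = 0) :
    ∀ m, m % n ≠ d % n → coeff m f = 0 := by
  classical
  have hn0 : 0 < n := by omega
  intro m₀
  by_contra hcc
  push_neg at hcc
  have hex2 : ∃ m, m % n ≠ d % n ∧ coeff m f ≠ 0 := ⟨m₀, hcc.1, hcc.2⟩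
  clear hcc m₀
  set m := Nat.find hex2 with hm_def
  obtain ⟨hm1, hm2⟩ : m % n ≠ d % n ∧ coeff m f ≠ 0 := Nat.find_spec hex2
  have hmmin : ∀ j < m, j % n ≠ d % n → coeff j f = 0 := by
    intro j hj hjr
    by_contra hc
    exact (Nat.find_min hex2 hj) ⟨hjr, hc⟩
  set a : PowerSeries k := PowerSeries.mk
    (fun i => if i % n = d % n then coeff i f else 0) with ha_def
  set b : PowerSeries k := f - a with hb_def
  have ha_res : ∀ i, i % n ≠ d % n → coeff i a = 0 := by
    intro i hi; rw [ha_def, coeff_mk, if_neg hi]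
  have ha_lt : ∀ i < d, coeff i a = 0 := by
    intro i hi
    rw [ha_def, coeff_mk]
    split <;> simp [hdmin i hi]
  have ha_d : coeff d a = coeff d f := by rw [ha_def, coeff_mk, if_pos rfl]
  have hcb : ∀ j, coeff j b = coeff j f - coeff j a := by
    intro j; rw [hb_def, map_sub]
  have hb_lt : ∀ j < m, coeff j b = 0 := by
    intro j hj
    rw [hcb]
    by_cases hjr : j % n = d % n
    · rw [ha_def, coeff_mk, if_pos hjr, sub_self]
    · rw [hmmin j hj hjr, ha_res j hjr, sub_zero]
  have hb_m : coeff m b = coeff m f := by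
    rw [hcb, ha_res m hm1, sub_zero]
  have hdm : d < m := by
    rcases Nat.lt_or_ge d m with h | h
    · exact h
    · rcases Nat.eq_or_lt_of_le h with heq | h2
      · exact absurd (by rw [heq]) hm1
      · exact absurd (hdmin m h2) hm2
  set t := m + (n - 1) * d with ht_def
  have hsub1 : (n - 1) * d + d = n * d := by
    rw [Nat.sub_one_mul]
    have := Nat.le_mul_of_pos_left d hn0
    omega
  have hnt : ¬ n ∣ t := by
    rintro ⟨c, hc⟩
    apply hm1
    have hcd : d ≤ c := by
      by_contra hcd
      push_neg at hcd
      have h1 : n * c + n ≤ n * d := by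
        have := Nat.mul_le_mul_left n (by omega : c + 1 ≤ d)
        rw [Nat.mul_add, Nat.mul_one] at this
        omega
      omega
    have e : n * (c - d) + n * d = n * c := by
      rw [← Nat.mul_add]
      congr 1
      omega
    have hme : m = n * (c - d) + d := by omega
    rw [hme, Nat.mul_add_mod]
  have hzero : coeff t (f ^ n) = 0 := hsupp t hnt
  have hfab : f = a + b := by rw [hb_def]; ring
  rw [hfab, add_pow, map_sum] at hzero
  have hcast : ∀ c : ℕ, ((c : ℕ) : PowerSeries k) = C (c : k) := by
    intro c; rw [← map_natCast (C (R := k)) c]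
  have hmain : ∀ i ∈ Finset.range (n + 1), i ≠ n - 1 →
      coeff t (a ^ i * b ^ (n - i) * ((n.choose i : ℕ) : PowerSeries k)) = 0 := by
    intro i hi hine
    rw [Finset.mem_range] at hi
    rw [hcast, coeff_mul_C]
    rcases Nat.eq_or_lt_of_le (by omega : i ≤ n) with rfl | hilt
    · rw [Nat.sub_self, pow_zero, mul_one]
      rw [coeff_pow_residue hn0 ha_res i t (by
        rw [Nat.mul_mod_right]
        intro h0
        exact hnt (Nat.dvd_iff_mod_eq_zero.2 h0)), zero_mul]
    · have hile : i ≤ n - 2 := by omega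
      obtain ⟨q, hq⟩ : ∃ q, n - i = q + 2 := ⟨n - i - 2, by omega⟩
      have hlt : t < i * d + (n - i) * m := by
        have e1 : (n - 1) * d = i * d + q * d + d := by
          have h5 : n - 1 = i + q + 1 := by omega
          rw [h5]; ring
        have e2 : (n - i) * m = q * m + 2 * m := by rw [hq]; ring
        have g1 : q * d ≤ q * m := Nat.mul_le_mul_left q (le_of_lt hdm)
        omega
      rw [coeff_mul_eq_zero_of_lt (coeff_pow_lt ha_lt i) (coeff_pow_lt hb_lt (n - i)) hlt,
        zero_mul]
  rw [Finset.sum_eq_single_of_mem (n - 1) (Finset.mem_range.2 (by omega)) hmain] at hzero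
  have h1 : n - (n - 1) = 1 := by omega
  rw [h1, pow_one, hcast, coeff_mul_C] at hzero
  have ht2 : t = (n - 1) * d + m := by omega
  rw [ht2, coeff_mul_orders (coeff_pow_lt ha_lt (n - 1)) hb_lt,
    coeff_pow_orders ha_lt (n - 1), ha_d, hb_m,
    Nat.choose_symm (by omega : 1 ≤ n), Nat.choose_one_right] at hzero
  have hn_ne : ((n : ℕ) : k) ≠ 0 := Nat.cast_ne_zero.2 (by omega)
  exact (mul_ne_zero (mul_ne_zero (pow_ne_zero _ hd) hm2) hn_ne) hzero

lemma key_decomp {n : ℕ} (hn : 2 ≤ n) {f : PowerSeries k} (hf : f ≠ 0)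
    (hsupp : ∀ t, ¬ n ∣ t → coeff t (f ^ n) = 0) :
    ∃ (R : PowerSeries k) (r : ℕ), r ≤ n - 1 ∧ f = X ^ r * Ee n R := by
  classical
  have hn0 : 0 < n := by omega
  have hex : ∃ i, coeff i f ≠ 0 := by
    by_contra hc
    push_neg at hc
    exact hf (PowerSeries.ext fun i => by rw [hc i, map_zero])
  set d := Nat.find hex with hd_def
  have hd : coeff d f ≠ 0 := Nat.find_spec hex
  have hdmin : ∀ i < d, coeff i f = 0 := fun i hi =>
    not_not.1 (Nat.find_min hex hi)
  have hclaim : ∀ m, m % n ≠ d % n → coeff m f = 0 :=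
    key_residue hn hsupp hd hdmin
  refine ⟨PowerSeries.mk (fun i => coeff (n * i + d % n) f), d % n,
    by have := Nat.mod_lt d hn0; omega, ?_⟩
  ext t
  rw [mul_comm, coeff_mul_X_pow']
  by_cases hres : t % n = d % n
  · have hrle : d % n ≤ t := hres ▸ Nat.mod_le t n
    rw [if_pos hrle, coeff_Ee]
    have hdam := Nat.div_add_mod t n
    have hdm2 : t - d % n = n * (t / n) := by omega
    rw [if_pos ⟨t / n, hdm2⟩, hdm2, Nat.mul_div_cancel_left _ hn0, coeff_mk]
    have he : n * (t / n) + d % n = t := by omega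
    rw [he]
  · rw [hclaim t hres]
    symm
    by_cases hle : d % n ≤ t
    · rw [if_pos hle, coeff_Ee]
      by_cases hdvd : n ∣ t - d % n
      · exfalso
        obtain ⟨e, he⟩ := hdvd
        apply hres
        have h3 : t = n * e + d % n := by omega
        rw [h3, Nat.mul_add_mod, Nat.mod_mod_of_dvd d dvd_rfl]
      · rw [if_neg hdvd]
    · rw [if_neg hle]

end

theorem stmt4 {k : Type*} [Field k] [IsAlgClosed k] [CharZero k]
    {n : ℕ} (hn : 2 ≤ n) (μ₁ μ₂ : PowerSeries k)
    (h₁ : ∀ c : k, μ₁ ≠ C c) (h₂ : ∀ c : k, μ₂ ≠ C c) :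
    μ₁ ^ n = comp μ₂ (X ^ n) ↔
      ∃ (R : PowerSeries k) (r : ℕ), r ≤ n - 1 ∧
        μ₁ = X ^ r * comp R (X ^ n) ∧ μ₂ = X ^ r * R ^ n := by
  have hn0 : 0 < n := by omega
  constructor
  · intro H
    rw [comp_X_pow hn0] at H
    have hf : μ₁ ≠ 0 := by
      intro h0
      exact h₁ 0 (by rw [h0, map_zero])
    have hsupp : ∀ t, ¬ n ∣ t → coeff t (μ₁ ^ n) = 0 := by
      intro t ht
      rw [H, coeff_Ee, if_neg ht]
    obtain ⟨R, r, hr, hμ₁⟩ := key_decomp hn hf hsupp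
    refine ⟨R, r, hr, by rw [comp_X_pow hn0]; exact hμ₁, ?_⟩
    apply Ee_inj hn0
    rw [← H, hμ₁, mul_pow, ← pow_mul, Ee_mul hn0, Ee_pow hn0 R n, Ee_X_pow hn0,
      Nat.mul_comm r n]
  · rintro ⟨R, r, hr, hμ₁, hμ₂⟩
    rw [comp_X_pow hn0] at hμ₁ ⊢
    rw [hμ₁, hμ₂, mul_pow, ← pow_mul, Ee_mul hn0, Ee_pow hn0 R n, Ee_X_pow hn0,
      Nat.mul_comm r n]
end

section
/- Let k be an algebraically closed field of characteristic zero, A ∈ k[[z]] of order n ≥ 2, and β_A a Böttcher function for A (so A ∘ β_A = β_A ∘ z^n with β_A of order 1). Then a series φ ∈ k[[z]] of order 1 satisfies A ∘ φ = A if and only if φ = β_A ∘ (εz) ∘ β_A^{-1} for some n-th root of unity ε. -/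
open PowerSeries

section CompAux
open Finset
variable {k : Type*} [Field k]

lemma coeff_comp (A B : PowerSeries k) (n : ℕ) :
    coeff n (comp A B) = ∑ i ∈ range (n + 1), coeff i A * coeff n (B ^ i) :=
  coeff_mk _ _

lemma constantCoeff_comp (A B : PowerSeries k) :
    constantCoeff (comp A B) = constantCoeff A := by
  have h := coeff_comp A B 0
  simpa using h

lemma coeff_pow_eq_zero {B : PowerSeries k} (hB : constantCoeff B = 0) {i m : ℕ}
    (h : m < i) : coeff m (B ^ i) = 0 :=
  X_pow_dvd_iff.mp (pow_dvd_pow_of_dvd (X_dvd_iff.mpr hB) i) m h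

lemma comp_X (A : PowerSeries k) : comp A X = A := by
  ext m
  rw [coeff_comp]
  rw [Finset.sum_eq_single m]
  · simp [coeff_X_pow]
  · intro i _ hi
    simp [coeff_X_pow, hi.symm]
  · intro h
    exact absurd (Finset.mem_range.mpr (Nat.lt_succ_self m)) h

lemma X_comp {B : PowerSeries k} (hB : constantCoeff B = 0) : comp X B = B := by
  ext m
  rw [coeff_comp]
  rcases Nat.eq_zero_or_pos m with rfl | hm
  · simpa using hB.symm
  · rw [Finset.sum_eq_single 1]
    · simp
    · intro i _ hi
      simp [coeff_X, hi]
    · intro h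
      exact absurd (Finset.mem_range.mpr (by omega)) h

lemma one_comp (B : PowerSeries k) : comp (1 : PowerSeries k) B = 1 := by
  ext m
  rw [coeff_comp]
  rw [Finset.sum_eq_single 0]
  · simp
  · intro i _ hi
    simp [coeff_one, hi]
  · intro h
    exact absurd (Finset.mem_range.mpr (by omega)) h

lemma coeff_eval₂_eq_zero {B : PowerSeries k} (hB : constantCoeff B = 0) {p : Polynomial k}
    {m : ℕ} (hp : ∀ j ≤ m, p.coeff j = 0) :
    coeff m (Polynomial.eval₂ C B p) = 0 := by
  rw [Polynomial.eval₂_eq_sum, Polynomial.sum, map_sum]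
  refine Finset.sum_eq_zero fun e _ => ?_
  rw [coeff_C_mul]
  rcases le_or_gt e m with h | h
  · rw [hp e h, zero_mul]
  · rw [coeff_pow_eq_zero hB h, mul_zero]

lemma coeff_comp_eq_eval₂ {B : PowerSeries k} (hB : constantCoeff B = 0) (A : PowerSeries k)
    {m N : ℕ} (h : m < N) :
    coeff m (comp A B) = coeff m (Polynomial.eval₂ C B (trunc N A)) := by
  rw [coeff_comp, trunc_apply, ← Finset.range_eq_Ico, Polynomial.eval₂_finset_sum, map_sum]
  simp only [Polynomial.eval₂_monomial, coeff_C_mul]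
  exact Finset.sum_subset (Finset.range_subset_range.mpr h) fun i _ hni => by
    rw [coeff_pow_eq_zero hB (by simpa using hni), mul_zero]

lemma mul_comp {B : PowerSeries k} (hB : constantCoeff B = 0) (P Q : PowerSeries k) :
    comp (P * Q) B = comp P B * comp Q B := by
  ext m
  rw [coeff_comp_eq_eval₂ hB _ (Nat.lt_succ_self m)]
  have key : coeff m (Polynomial.eval₂ C B (trunc (m + 1) (P * Q)))
      = coeff m (Polynomial.eval₂ C B (trunc (m + 1) P * trunc (m + 1) Q)) := by
    have hd : ∀ j ≤ m, (trunc (m + 1) P * trunc (m + 1) Q - trunc (m + 1) (P * Q)).coeff j = 0 := by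
      intro j hj
      rw [Polynomial.coeff_sub, Polynomial.coeff_mul, coeff_trunc, if_pos (by omega),
        PowerSeries.coeff_mul, sub_eq_zero]
      refine Finset.sum_congr rfl fun x hx => ?_
      rw [Finset.HasAntidiagonal.mem_antidiagonal] at hx
      rw [coeff_trunc, coeff_trunc, if_pos (by omega), if_pos (by omega)]
    have h0 := coeff_eval₂_eq_zero hB hd
    rw [Polynomial.eval₂_sub, map_sub, sub_eq_zero] at h0
    exact h0.symm
  rw [key, Polynomial.eval₂_mul, PowerSeries.coeff_mul, PowerSeries.coeff_mul]
  refine Finset.sum_congr rfl fun x hx => ?_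
  rw [Finset.HasAntidiagonal.mem_antidiagonal] at hx
  rw [← coeff_comp_eq_eval₂ hB P (show x.1 < m + 1 by omega),
    ← coeff_comp_eq_eval₂ hB Q (show x.2 < m + 1 by omega)]

lemma pow_comp {B : PowerSeries k} (hB : constantCoeff B = 0) (P : PowerSeries k) (j : ℕ) :
    comp (P ^ j) B = comp P B ^ j := by
  induction j with
  | zero => simpa using one_comp B
  | succ j ih => rw [pow_succ, mul_comp hB, ih, pow_succ]

lemma comp_assoc (A : PowerSeries k) {B C : PowerSeries k} (hB : constantCoeff B = 0)
    (hC : constantCoeff C = 0) : comp (comp A B) C = comp A (comp B C) := by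
  ext m
  rw [coeff_comp, coeff_comp]
  have step1 : ∀ i ∈ Finset.range (m + 1),
      coeff i (comp A B) * coeff m (C ^ i)
        = ∑ j ∈ Finset.range (m + 1), coeff j A * coeff i (B ^ j) * coeff m (C ^ i) := by
    intro i hi
    rw [Finset.mem_range] at hi
    rw [coeff_comp, ← Finset.sum_mul]
    congr 1
    refine Finset.sum_subset (Finset.range_subset_range.mpr (by omega)) fun j _ hnj => ?_
    rw [coeff_pow_eq_zero hB (by simpa using hnj), mul_zero]
  rw [Finset.sum_congr rfl step1, Finset.sum_comm]
  refine Finset.sum_congr rfl fun j _ => ?_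
  rw [← pow_comp hC B j, coeff_comp, Finset.mul_sum]
  exact Finset.sum_congr rfl fun i _ => mul_assoc _ _ _
lemma pow_eq_one_constant [CharZero k] {u : PowerSeries k} {n : ℕ} (hn : 1 ≤ n)
    (h : u ^ n = 1) : u = C (constantCoeff u) := by
  set c := constantCoeff u with hc
  have hcn : c ^ n = 1 := by rw [hc, ← map_pow, h, map_one]
  have hc0 : c ≠ 0 := by
    intro h0
    rw [h0, zero_pow (by omega : n ≠ 0)] at hcn
    exact zero_ne_one hcn
  ext m
  induction m using Nat.strong_induction_on with
  | _ m ih =>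
    rcases Nat.eq_zero_or_pos m with rfl | hm
    · simp [coeff_zero_eq_constantCoeff, ← hc]
    · have hv : (X : PowerSeries k) ^ m ∣ (u - C c) := by
        rw [X_pow_dvd_iff]
        intro j hj
        rw [map_sub, coeff_C]
        rcases Nat.eq_zero_or_pos j with rfl | hj1
        · simp [coeff_zero_eq_constantCoeff, ← hc]
        · rw [if_neg (by omega), sub_zero, ih j hj, coeff_C, if_neg (by omega)]
      obtain ⟨v, hvdef⟩ := hv
      have hu : u = C c + X ^ m * v := by rw [← hvdef]; ring
      have hco : coeff m (u ^ n) = c ^ (n - 1) * ((n : k) * coeff m (X ^ m * v)) := by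
        rw [hu, add_pow, map_sum]
        rw [Finset.sum_eq_single_of_mem (n - 1) (Finset.mem_range.mpr (by omega))]
        · rw [Nat.sub_sub_self hn, pow_one, Nat.choose_symm hn, Nat.choose_one_right,
            ← map_pow, ← map_natCast C n, mul_right_comm, ← map_mul, coeff_C_mul]
          ring
        · intro i hi hne
          rcases eq_or_ne i n with rfl | hin
          · rw [← map_pow, hcn, map_one, Nat.sub_self, pow_zero, mul_one, Nat.choose_self,
              Nat.cast_one, mul_one, coeff_one, if_neg (by omega)]
          · have h2 : 2 ≤ n - i := by
              rw [Finset.mem_range] at hi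
              omega
            have hW : (X : PowerSeries k) ^ (m + 1) ∣ (X ^ m * v) ^ (n - i) := by
              refine dvd_trans ?_ (pow_dvd_pow _ h2)
              rw [mul_pow, ← pow_mul]
              exact Dvd.dvd.mul_right (pow_dvd_pow X (by omega)) _
            have hdvd : (X : PowerSeries k) ^ (m + 1) ∣
                C c ^ i * (X ^ m * v) ^ (n - i) * ((n.choose i : ℕ) : PowerSeries k) :=
              (hW.mul_left _).mul_right _
            exact X_pow_dvd_iff.mp hdvd m (Nat.lt_succ_self m)
      rw [h, coeff_one, if_neg (by omega)] at hco
      have hn0 : (n : k) ≠ 0 := Nat.cast_ne_zero.mpr (by omega)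
      have hcp : c ^ (n - 1) ≠ 0 := pow_ne_zero _ hc0
      have hmv : coeff m (X ^ m * v) = 0 := by
        rcases mul_eq_zero.mp hco.symm with h' | h'
        · exact absurd h' hcp
        · rcases mul_eq_zero.mp h' with h'' | h''
          · exact absurd h'' hn0
          · exact h''
      have : coeff m u = coeff m (X ^ m * v) + coeff m (C c) := by
        rw [← map_add]
        congr 1
        rw [hu]; ring
      rw [this, hmv, zero_add]

lemma eq_C_mul_X_of_pow {ψ : PowerSeries k} [CharZero k] {n : ℕ} (hn : 1 ≤ n)
    (h : ψ ^ n = X ^ n) : ∃ ε : k, ε ^ n = 1 ∧ ψ = C ε * X := by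
  have hψ0 : constantCoeff ψ = 0 := by
    have : (constantCoeff ψ) ^ n = 0 := by
      rw [← map_pow, h, map_pow, constantCoeff_X, zero_pow (by omega : n ≠ 0)]
    exact pow_eq_zero_iff (by omega : n ≠ 0) |>.mp this
  obtain ⟨u, hu⟩ := X_dvd_iff.mpr hψ0
  have hXn : (X : PowerSeries k) ^ n ≠ 0 := pow_ne_zero _ X_ne_zero
  have hun : u ^ n = 1 := by
    have : (X : PowerSeries k) ^ n * u ^ n = X ^ n * 1 := by
      rw [mul_one, ← mul_pow, ← hu, h]
    exact mul_left_cancel₀ hXn this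
  refine ⟨constantCoeff u, ?_, ?_⟩
  · rw [← map_pow, hun, map_one]
  · rw [hu, ← pow_eq_one_constant hn hun, mul_comm]

end CompAux

theorem stmt6 {k : Type*} [Field k] [IsAlgClosed k] [CharZero k]
    {n : ℕ} (hn : 2 ≤ n) (A : PowerSeries k) (hA : A.order = (n : ℕ∞))
    (β βi : PowerSeries k) (hβ : β.order = 1)
    (hβA : comp A β = comp β (X ^ n))
    (hβi1 : comp β βi = X) (hβi2 : comp βi β = X)
    (φ : PowerSeries k) (hφ : φ.order = 1) :
    comp A φ = A ↔ ∃ ε : k, ε ^ n = 1 ∧ φ = comp (comp β (C ε * X)) βi := by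
  have hβ0 : constantCoeff β = 0 := by
    have h0 : coeff 0 β = 0 := coeff_of_lt_order 0 (by rw [hβ]; exact_mod_cast zero_lt_one)
    rwa [coeff_zero_eq_constantCoeff] at h0
  have hφ0 : constantCoeff φ = 0 := by
    have h0 : coeff 0 φ = 0 := coeff_of_lt_order 0 (by rw [hφ]; exact_mod_cast zero_lt_one)
    rwa [coeff_zero_eq_constantCoeff] at h0
  have hβi0 : constantCoeff βi = 0 := by
    have := constantCoeff_comp βi β
    rw [hβi2, constantCoeff_X] at this
    exact this.symm
  have hXn0 : constantCoeff ((X : PowerSeries k) ^ n) = 0 := by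
    rw [map_pow, constantCoeff_X, zero_pow (by omega : n ≠ 0)]
  constructor
  · intro h
    have hχ0 : constantCoeff (comp φ β) = 0 := by rw [constantCoeff_comp]; exact hφ0
    set ψ := comp βi (comp φ β) with hψdef
    have hψ0 : constantCoeff ψ = 0 := by rw [hψdef, constantCoeff_comp]; exact hβi0
    have e1 : comp A (comp φ β) = comp β (X ^ n) := by
      rw [← comp_assoc A hφ0 hβ0, h, hβA]
    have e2 : A = comp (comp β (X ^ n)) βi := by
      rw [← hβA, comp_assoc A hβ0 hβi0, hβi1, comp_X]
    have hT0 : constantCoeff (comp (X ^ n) ψ) = 0 := by rw [constantCoeff_comp]; exact hXn0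
    have e3 : comp β (comp (X ^ n) ψ) = comp β (X ^ n) := by
      rw [← e1, e2, comp_assoc _ hβi0 hχ0, comp_assoc β hXn0 hψ0]
    have e4 : comp (X ^ n) ψ = X ^ n := by
      have h1 := comp_assoc βi hβ0 hT0
      rw [hβi2, X_comp hT0, e3] at h1
      have h2 := comp_assoc βi hβ0 hXn0
      rw [hβi2, X_comp hXn0] at h2
      rw [h1, ← h2]
    have e5 : ψ ^ n = X ^ n := by
      rw [← e4, pow_comp hψ0 X n, X_comp hψ0]
    obtain ⟨ε, hε, hψeq⟩ := eq_C_mul_X_of_pow (by omega) e5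
    refine ⟨ε, hε, ?_⟩
    rw [← hψeq]
    have e6 : comp β ψ = comp φ β := by
      rw [hψdef, ← comp_assoc β hβi0 hχ0, hβi1, X_comp hχ0]
    rw [e6, comp_assoc φ hβ0 hβi0, hβi1, comp_X]
  · rintro ⟨ε, hε, rfl⟩
    have hCX0 : constantCoeff (C ε * X) = 0 := by simp
    have hβCX0 : constantCoeff (comp β (C ε * X)) = 0 := by
      rw [constantCoeff_comp]; exact hβ0
    have key : comp A (comp β (C ε * X)) = comp A β := by
      rw [← comp_assoc A hβ0 hCX0, hβA, comp_assoc β hXn0 hCX0, pow_comp hCX0 X n,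
        X_comp hCX0, mul_pow, ← map_pow, hε, map_one, one_mul]
    rw [← comp_assoc A hβCX0 hβi0, key, comp_assoc A hβ0 hβi0, hβi1, comp_X]
end

section
/- Let k be an algebraically closed field of characteristic zero and A ∈ k[[z]] of order at least 2. If some iterate A^{∘s}, s ≥ 1, has the form z^r·R(z^m) for some R ∈ k[[z]] and integers m ≥ 2, r ≥ 0, then A itself has the form z^{r₀}·R₀(z^m) for some R₀ ∈ k[[z]] and integer r₀ ≥ 0. -/
open PowerSeries

section Aux

open Finset

variable {k : Type*} [Field k]

lemma ps18_coeff_comp (F G : PowerSeries k) (n : ℕ) :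
    coeff n (comp F G) = ∑ i ∈ range (n + 1), coeff i F * coeff n (G ^ i) := by
  simp [comp]

lemma ps18_comp_X (F : PowerSeries k) : comp F X = F := by
  ext n
  rw [ps18_coeff_comp, Finset.sum_eq_single n]
  · simp
  · intro i _ hne
    rw [coeff_X_pow, if_neg (fun h => hne h.symm), mul_zero]
  · intro h; exact absurd (self_mem_range_succ n) h

lemma ps18_comp_add_left (F G H : PowerSeries k) :
    comp (F + G) H = comp F H + comp G H := by
  ext n
  simp [ps18_coeff_comp, add_mul, Finset.sum_add_distrib]

lemma ps18_comp_C_mul_left (c : k) (F H : PowerSeries k) :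
    comp (C c * F) H = C c * comp F H := by
  ext n
  simp [ps18_coeff_comp, Finset.mul_sum, mul_assoc]

lemma ps18_comp_C_mul_right (c : k) (F G : PowerSeries k) :
    comp F (C c * G) = comp (rescale c F) G := by
  ext n
  rw [ps18_coeff_comp, ps18_coeff_comp]
  refine Finset.sum_congr rfl fun i _ => ?_
  rw [mul_pow, ← map_pow, coeff_C_mul, coeff_rescale]
  ring

lemma ps18_rescale_comp (c : k) (F G : PowerSeries k) :
    rescale c (comp F G) = comp F (rescale c G) := by
  ext n
  rw [coeff_rescale, ps18_coeff_comp, ps18_coeff_comp, Finset.mul_sum]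
  refine Finset.sum_congr rfl fun i _ => ?_
  rw [← map_pow, coeff_rescale]
  ring

lemma ps18_coeff_mul_of_lt {f g : PowerSeries k} {o₁ o₂ : ℕ}
    (hf : ∀ i < o₁, coeff i f = 0) (hg : ∀ i < o₂, coeff i g = 0)
    {n : ℕ} (hn : n < o₁ + o₂) : coeff n (f * g) = 0 := by
  rw [coeff_mul]
  refine Finset.sum_eq_zero fun p hp => ?_
  rw [Finset.HasAntidiagonal.mem_antidiagonal] at hp
  rcases lt_or_ge p.1 o₁ with h | h
  · rw [hf _ h, zero_mul]
  · rw [hg _ (by omega), mul_zero]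

lemma ps18_coeff_mul_of_eq {f g : PowerSeries k} {o₁ o₂ : ℕ}
    (hf : ∀ i < o₁, coeff i f = 0) (hg : ∀ i < o₂, coeff i g = 0) :
    coeff (o₁ + o₂) (f * g) = coeff o₁ f * coeff o₂ g := by
  rw [coeff_mul]
  rw [Finset.sum_eq_single (o₁, o₂)]
  · intro p hp hne
    rw [Finset.HasAntidiagonal.mem_antidiagonal] at hp
    rcases lt_or_ge p.1 o₁ with h | h
    · rw [hf _ h, zero_mul]
    · have : p.2 < o₂ := by
        rcases eq_or_lt_of_le h with h' | h'
        · exfalso; apply hne; rw [Prod.ext_iff]; omega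
        · omega
      rw [hg _ this, mul_zero]
  · intro h; exact absurd (Finset.HasAntidiagonal.mem_antidiagonal.2 (rfl : o₁ + o₂ = o₁ + o₂)) h

lemma ps18_coeff_pow_of_lt {f : PowerSeries k} {o : ℕ}
    (hf : ∀ i < o, coeff i f = 0) (j : ℕ) :
    ∀ n < j * o, coeff n (f ^ j) = 0 := by
  induction j with
  | zero => intro n hn; omega
  | succ j ih =>
    intro n hn
    rw [Nat.succ_mul] at hn
    rw [pow_succ]
    exact ps18_coeff_mul_of_lt (fun i hi => ih i hi) hf hn

lemma ps18_coeff_pow_of_eq {f : PowerSeries k} {o : ℕ}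
    (hf : ∀ i < o, coeff i f = 0) (j : ℕ) :
    coeff (j * o) (f ^ j) = (coeff o f) ^ j := by
  induction j with
  | zero => simp
  | succ j ih =>
    rw [pow_succ, pow_succ, ← ih]
    have := ps18_coeff_mul_of_eq (f := f ^ j) (g := f) (ps18_coeff_pow_of_lt hf j) hf
    rw [← this]
    ring_nf

lemma ps18_coeff_comp_of_lt {F G : PowerSeries k} {n₁ o : ℕ}
    (hF : ∀ i < n₁, coeff i F = 0) (hG : ∀ i < o, coeff i G = 0)
    {n : ℕ} (hn : n < n₁ * o) : coeff n (comp F G) = 0 := by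
  rw [ps18_coeff_comp]
  refine Finset.sum_eq_zero fun i _ => ?_
  rcases lt_or_ge i n₁ with h | h
  · rw [hF _ h, zero_mul]
  · rw [ps18_coeff_pow_of_lt hG i n (lt_of_lt_of_le hn (Nat.mul_le_mul_right o h)), mul_zero]

/-- Geometric-sum factor appearing in the discrete Taylor expansion. -/
noncomputable def ps18Sgeom (W h : PowerSeries k) (i : ℕ) : PowerSeries k :=
  ∑ u ∈ range i, (W + h) ^ u * W ^ (i - 1 - u)

/-- The "divided difference" factor `Q` with `comp A (W+h) = comp A W + h * Q`. -/
noncomputable def ps18Qser (A W h : PowerSeries k) : PowerSeries k :=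
  PowerSeries.mk fun q => ∑ i ∈ range (q + 2), coeff i A * coeff q (ps18Sgeom W h i)

lemma ps18_coeff_S_of_lt {W h : PowerSeries k} {o : ℕ}
    (hW : ∀ j < o, coeff j W = 0) (hWh : ∀ j < o, coeff j (W + h) = 0)
    (i : ℕ) {q : ℕ} (hq : q < (i - 1) * o) :
    coeff q (ps18Sgeom W h i) = 0 := by
  rw [ps18Sgeom, map_sum]
  refine Finset.sum_eq_zero fun u hu => ?_
  rw [Finset.mem_range] at hu
  have huu : u + (i - 1 - u) = i - 1 := by omega
  refine ps18_coeff_mul_of_lt (ps18_coeff_pow_of_lt hWh u)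
    (ps18_coeff_pow_of_lt hW (i - 1 - u)) ?_
  calc q < (i - 1) * o := hq
  _ = u * o + (i - 1 - u) * o := by rw [← Nat.add_mul, huu]

lemma ps18_S_mul_h (W h : PowerSeries k) (i : ℕ) :
    ps18Sgeom W h i * h = (W + h) ^ i - W ^ i := by
  have := geom_sum₂_mul (W + h) W i
  simpa [ps18Sgeom] using this

lemma ps18_taylor_comp (A W h : PowerSeries k)
    (hW : ∀ j < 1, coeff j W = 0) (hWh : ∀ j < 1, coeff j (W + h) = 0) :
    comp A (W + h) = comp A W + h * ps18Qser A W h := by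
  ext n
  have e1 : coeff n (comp A (W + h)) =
      ∑ i ∈ range (n + 2), coeff i A * coeff n ((W + h) ^ i) := by
    rw [ps18_coeff_comp]
    refine Finset.sum_subset (Finset.range_subset_range.2 (by omega)) fun i _ hi => ?_
    rw [Finset.mem_range, not_lt] at hi
    rw [ps18_coeff_pow_of_lt hWh i n (by omega), mul_zero]
  have e2 : coeff n (comp A W) =
      ∑ i ∈ range (n + 2), coeff i A * coeff n (W ^ i) := by
    rw [ps18_coeff_comp]
    refine Finset.sum_subset (Finset.range_subset_range.2 (by omega)) fun i _ hi => ?_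
    rw [Finset.mem_range, not_lt] at hi
    rw [ps18_coeff_pow_of_lt hW i n (by omega), mul_zero]
  have e3 : coeff n (h * ps18Qser A W h) =
      ∑ i ∈ range (n + 2), coeff i A *
        (coeff n ((W + h) ^ i) - coeff n (W ^ i)) := by
    rw [coeff_mul]
    have hQq : ∀ p ∈ Finset.HasAntidiagonal.antidiagonal n, coeff p.2 (ps18Qser A W h) =
        ∑ i ∈ range (n + 2), coeff i A * coeff p.2 (ps18Sgeom W h i) := by
      intro p hp
      rw [Finset.HasAntidiagonal.mem_antidiagonal] at hp
      rw [ps18Qser, coeff_mk]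
      refine Finset.sum_subset (Finset.range_subset_range.2 (by omega)) fun i _ hi => ?_
      rw [Finset.mem_range, not_lt] at hi
      rw [ps18_coeff_S_of_lt hW hWh i (by omega), mul_zero]
    calc ∑ p ∈ Finset.HasAntidiagonal.antidiagonal n, coeff p.1 h * coeff p.2 (ps18Qser A W h)
        = ∑ p ∈ Finset.HasAntidiagonal.antidiagonal n, ∑ i ∈ range (n + 2),
            coeff i A * (coeff p.1 h * coeff p.2 (ps18Sgeom W h i)) := by
          refine Finset.sum_congr rfl fun p hp => ?_
          rw [hQq p hp, Finset.mul_sum]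
          exact Finset.sum_congr rfl fun i _ => by ring
      _ = ∑ i ∈ range (n + 2), ∑ p ∈ Finset.HasAntidiagonal.antidiagonal n,
            coeff i A * (coeff p.1 h * coeff p.2 (ps18Sgeom W h i)) :=
          Finset.sum_comm
      _ = ∑ i ∈ range (n + 2), coeff i A *
            (coeff n ((W + h) ^ i) - coeff n (W ^ i)) := by
          refine Finset.sum_congr rfl fun i _ => ?_
          rw [← Finset.mul_sum, ← coeff_mul, mul_comm h (ps18Sgeom W h i),
            ps18_S_mul_h, map_sub]
  rw [map_add, e1, e2, e3, ← Finset.sum_add_distrib]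
  exact Finset.sum_congr rfl fun i _ => by ring

lemma ps18_Qser_coeff_of_lt {A W h : PowerSeries k} {o d : ℕ}
    (hA : ∀ i < d, coeff i A = 0)
    (hW : ∀ j < o, coeff j W = 0) (hWh : ∀ j < o, coeff j (W + h) = 0)
    {q : ℕ} (hq : q < (d - 1) * o) : coeff q (ps18Qser A W h) = 0 := by
  rw [ps18Qser, coeff_mk]
  refine Finset.sum_eq_zero fun i _ => ?_
  rcases lt_or_ge i d with hid | hid
  · rw [hA _ hid, zero_mul]
  · rw [ps18_coeff_S_of_lt hW hWh i
      (lt_of_lt_of_le hq (Nat.mul_le_mul_right o (by omega))), mul_zero]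

lemma ps18_Qser_lead {A W h : PowerSeries k} {o d : ℕ} (ho : 1 ≤ o) (hd : 1 ≤ d)
    (hA : ∀ i < d, coeff i A = 0)
    (hW : ∀ j < o, coeff j W = 0) (hWh : ∀ j < o, coeff j (W + h) = 0)
    (hl : coeff o (W + h) = coeff o W) :
    coeff ((d - 1) * o) (ps18Qser A W h) =
      (d : k) * (coeff d A * (coeff o W) ^ (d - 1)) := by
  rw [ps18Qser, coeff_mk]
  have hdo : d - 1 ≤ (d - 1) * o := Nat.le_mul_of_pos_right _ (by omega)
  rw [Finset.sum_eq_single d]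
  · rw [ps18Sgeom, map_sum]
    have : ∀ u ∈ range d, coeff ((d - 1) * o) ((W + h) ^ u * W ^ (d - 1 - u))
        = (coeff o W) ^ (d - 1) := by
      intro u hu
      rw [Finset.mem_range] at hu
      have huu : u + (d - 1 - u) = d - 1 := by omega
      have hq : (d - 1) * o = u * o + (d - 1 - u) * o := by rw [← Nat.add_mul, huu]
      rw [hq, ps18_coeff_mul_of_eq (ps18_coeff_pow_of_lt hWh u)
          (ps18_coeff_pow_of_lt hW (d - 1 - u)),
        ps18_coeff_pow_of_eq hWh, ps18_coeff_pow_of_eq hW, hl, ← pow_add, huu]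
    rw [Finset.sum_congr rfl this, Finset.sum_const, Finset.card_range, nsmul_eq_mul]
    ring
  · intro i _ hne
    rcases lt_or_ge i d with hid | hid
    · rw [hA _ hid, zero_mul]
    · have : (d - 1) * o < (i - 1) * o :=
        mul_lt_mul_of_pos_right (by omega) (by omega)
      rw [ps18_coeff_S_of_lt hW hWh i this, mul_zero]
  · intro hd'
    exact absurd (Finset.mem_range.2 (by omega)) hd'

lemma ps18_coeff_comp_Xpow (F : PowerSeries k) {m : ℕ} (hm : 1 ≤ m) (q : ℕ) :
    coeff q (comp F (X ^ m)) = if m ∣ q then coeff (q / m) F else 0 := by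
  rw [ps18_coeff_comp]
  by_cases hdvd : m ∣ q
  · rw [if_pos hdvd]
    rw [Finset.sum_eq_single (q / m)]
    · rw [← pow_mul, coeff_X_pow, if_pos (Nat.mul_div_cancel' hdvd).symm, mul_one]
    · intro i _ hne
      rw [← pow_mul, coeff_X_pow, if_neg, mul_zero]
      intro heq
      exact hne (by rw [heq, Nat.mul_div_cancel_left i (by omega)])
    · intro hmem
      exact absurd (Finset.mem_range.2 (by
        have := Nat.div_le_self q m; omega)) hmem
  · rw [if_neg hdvd]
    refine Finset.sum_eq_zero fun i _ => ?_
    rw [← pow_mul, coeff_X_pow, if_neg (fun heq => hdvd ⟨i, heq⟩), mul_zero]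

end Aux

theorem stmt18 {k : Type*} [Field k] [IsAlgClosed k] [CharZero k]
    {m s r : ℕ} (hm : 2 ≤ m) (hs : 1 ≤ s)
    (A R : PowerSeries k) (hA : A ≠ 0) (hA2 : 2 ≤ A.order)
    (h : iterComp A s = X ^ r * comp R (X ^ m)) :
    ∃ (R₀ : PowerSeries k) (r₀ : ℕ), A = X ^ r₀ * comp R₀ (X ^ m) := by
  classical
  -- the order d of A
  have horder : A.order ≠ ⊤ :=
    (PowerSeries.order_finite_iff_ne_zero.2 hA).ne
  set d : ℕ := A.order.toNat with hddef
  have hod : A.order = (d : ℕ∞) := (ENat.coe_toNat horder).symm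
  obtain ⟨had, hlow⟩ := PowerSeries.order_eq_nat.1 hod
  have hd2 : 2 ≤ d := by rw [hod] at hA2; exact_mod_cast hA2
  -- a primitive m-th root of unity
  have : NeZero (m : k) := ⟨Nat.cast_ne_zero.2 (by omega)⟩
  obtain ⟨ζ, hζroot⟩ := IsAlgClosed.exists_root (Polynomial.cyclotomic m k)
    (by rw [Polynomial.degree_cyclotomic]
        exact_mod_cast (Nat.totient_pos.2 (by omega)).ne')
  have hζ : IsPrimitiveRoot ζ m := (Polynomial.isRoot_cyclotomic_iff).1 hζroot
  have hζ0 : ζ ≠ 0 := hζ.ne_zero (by omega)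
  -- basic facts about the iterates
  have hiter : ∀ t : ℕ, (∀ i < d ^ t, coeff i (iterComp A t) = 0) ∧
      coeff (d ^ t) (iterComp A t) ≠ 0 := by
    intro t
    induction t with
    | zero =>
      constructor
      · intro i hi
        have : i = 0 := by simpa using hi
        subst this
        simp [iterComp]
      · simp [iterComp]
    | succ t ih =>
      have e1 : iterComp A (t + 1) = comp A (iterComp A t) := rfl
      constructor
      · intro N hN
        rw [e1, ps18_coeff_comp]
        refine Finset.sum_eq_zero fun i _ => ?_
        rcases lt_or_ge i d with hid | hid
        · rw [hlow _ hid, zero_mul]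
        · have : N < i * d ^ t := by
            calc N < d ^ (t + 1) := hN
            _ = d * d ^ t := by rw [pow_succ']
            _ ≤ i * d ^ t := Nat.mul_le_mul_right _ hid
          rw [ps18_coeff_pow_of_lt ih.1 i N this, mul_zero]
      · rw [e1, ps18_coeff_comp]
        rw [Finset.sum_eq_single d]
        · have e2 : d ^ (t + 1) = d * d ^ t := by rw [pow_succ']
          rw [e2, ps18_coeff_pow_of_eq ih.1]
          exact mul_ne_zero had (pow_ne_zero _ ih.2)
        · intro i _ hne
          rcases lt_or_ge i d with hid | hid
          · rw [hlow _ hid, zero_mul]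
          · have hid' : d < i := by omega
            have : d ^ (t + 1) < i * d ^ t := by
              calc d ^ (t + 1) = d * d ^ t := by rw [pow_succ']
              _ < i * d ^ t := mul_lt_mul_of_pos_right hid'
                  (pow_pos (by omega) t)
            rw [ps18_coeff_pow_of_lt ih.1 i _ this, mul_zero]
        · intro hmem
          have : d ≤ d ^ (t + 1) := by
            calc d = d ^ 1 := (pow_one d).symm
            _ ≤ d ^ (t + 1) := Nat.pow_le_pow_right (by omega) (by omega)
          exact absurd (Finset.mem_range.2 (by omega)) hmem
  -- the iterate is ζ-equivariant
  have hsupp : ∀ N, coeff N (iterComp A s) ≠ 0 → ζ ^ N = ζ ^ r := by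
    intro N hN
    rw [h] at hN
    rcases lt_or_ge N r with hNr | hNr
    · exact absurd (ps18_coeff_mul_of_lt (o₁ := r) (o₂ := 0)
        (fun i hi => by rw [PowerSeries.coeff_X_pow, if_neg (by omega)])
        (fun i hi => absurd hi (Nat.not_lt_zero _)) (by omega)) hN
    · have hNe : N = (N - r) + r := by omega
      rw [hNe, PowerSeries.coeff_X_pow_mul] at hN
      rw [ps18_coeff_comp_Xpow R (by omega) (N - r)] at hN
      by_cases hdvd : m ∣ N - r
      · obtain ⟨j, hj⟩ := hdvd
        have hNj : N = r + m * j := by omega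
        rw [hNj, pow_add, pow_mul, hζ.pow_eq_one, one_pow, mul_one]
      · rw [if_neg hdvd] at hN
        exact absurd rfl hN
  have hzetaB : rescale ζ (iterComp A s) = C (ζ ^ r) * iterComp A s := by
    ext N
    rw [coeff_rescale, coeff_C_mul]
    by_cases hN : coeff N (iterComp A s) = 0
    · rw [hN, mul_zero, mul_zero]
    · rw [hsupp N hN]
  have hzr : ζ ^ r = ζ ^ d ^ s := by
    have h1 := congrArg (coeff (d ^ s)) hzetaB
    rw [coeff_rescale, coeff_C_mul] at h1
    exact (mul_right_cancel₀ (hiter s).2 h1).symm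
  -- the key equivariance of A itself
  have key : rescale ζ A = C (ζ ^ d) * A := by
    by_contra hne
    have hex : ∃ n, coeff n (rescale ζ A - C (ζ ^ d) * A) ≠ 0 := by
      by_contra hc
      push_neg at hc
      refine hne (sub_eq_zero.1 (PowerSeries.ext fun n => ?_))
      rw [hc n, map_zero]
    set n₀ := Nat.find hex with hn₀def
    have hn0 : coeff n₀ (rescale ζ A - C (ζ ^ d) * A) ≠ 0 := Nat.find_spec hex
    have hminΔ : ∀ i < n₀, coeff i (rescale ζ A - C (ζ ^ d) * A) = 0 :=
      fun i hi => not_not.1 (Nat.find_min hex hi)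
    have hcoeffΔ : ∀ i, coeff i (rescale ζ A - C (ζ ^ d) * A)
        = (ζ ^ i - ζ ^ d) * coeff i A := by
      intro i
      rw [map_sub, coeff_rescale, coeff_C_mul]
      ring
    have hdn0 : d < n₀ := by
      by_contra hx
      push_neg at hx
      apply hn0
      rcases lt_or_eq_of_le hx with hx' | hx'
      · rw [hcoeffΔ, hlow _ hx', mul_zero]
      · rw [hcoeffΔ, hx', sub_self, zero_mul]
    have hF0 : ∀ i < n₀, coeff i A ≠ 0 → ζ ^ i = ζ ^ d := by
      intro i hi hai
      have hz := hminΔ i hi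
      rw [hcoeffΔ] at hz
      rcases mul_eq_zero.1 hz with h' | h'
      · exact sub_eq_zero.1 h'
      · exact absurd h' hai
    set p := n₀ - d with hpdef
    have hp1 : 1 ≤ p := by omega
    have hn₀eq : n₀ = d + p := by omega
    have claim : ∀ t, 1 ≤ t →
        (∀ i < p + d ^ t,
          coeff i (rescale ζ (iterComp A t) - C (ζ ^ d ^ t) * iterComp A t) = 0) ∧
        coeff (p + d ^ t)
          (rescale ζ (iterComp A t) - C (ζ ^ d ^ t) * iterComp A t) ≠ 0 := by
      intro t ht
      induction t, ht using Nat.le_induction with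
      | base =>
        have e : iterComp A 1 = A := by
          show comp A (iterComp A 0) = A
          show comp A X = A
          exact ps18_comp_X A
        rw [e, pow_one]
        have eL : p + d = n₀ := by omega
        rw [eL]
        exact ⟨hminΔ, hn0⟩
      | succ t ht IH =>
        have h2t : 2 ≤ d ^ t := by
          calc 2 ≤ d := hd2
          _ = d ^ 1 := (pow_one d).symm
          _ ≤ d ^ t := Nat.pow_le_pow_right (by omega) (by omega)
        have hit := hiter t
        have hitlow := hit.1
        have hitne := hit.2
        have hWlow : ∀ j < d ^ t, coeff j (C (ζ ^ d ^ t) * iterComp A t) = 0 :=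
          fun j hj => by rw [coeff_C_mul, hitlow j hj, mul_zero]
        have hRlow : ∀ j < d ^ t, coeff j (rescale ζ (iterComp A t)) = 0 :=
          fun j hj => by rw [coeff_rescale, hitlow j hj, mul_zero]
        have hWD : C (ζ ^ d ^ t) * iterComp A t +
            (rescale ζ (iterComp A t) - C (ζ ^ d ^ t) * iterComp A t)
            = rescale ζ (iterComp A t) := by ring
        have hWhlow : ∀ j < d ^ t, coeff j (C (ζ ^ d ^ t) * iterComp A t +
            (rescale ζ (iterComp A t) - C (ζ ^ d ^ t) * iterComp A t)) = 0 := by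
          rw [hWD]; exact hRlow
        -- the structural identity
        have hident : rescale ζ (iterComp A (t + 1)) -
              C (ζ ^ d ^ (t + 1)) * iterComp A (t + 1)
            = comp (rescale (ζ ^ d ^ t) A - C ((ζ ^ d ^ t) ^ d) * A) (iterComp A t)
              + (rescale ζ (iterComp A t) - C (ζ ^ d ^ t) * iterComp A t) *
                ps18Qser A (C (ζ ^ d ^ t) * iterComp A t)
                  (rescale ζ (iterComp A t) - C (ζ ^ d ^ t) * iterComp A t) := by
          have e1 : iterComp A (t + 1) = comp A (iterComp A t) := rfl
          have e2 : rescale ζ (comp A (iterComp A t)) =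
              comp A (C (ζ ^ d ^ t) * iterComp A t +
                (rescale ζ (iterComp A t) - C (ζ ^ d ^ t) * iterComp A t)) := by
            rw [ps18_rescale_comp, hWD]
          have e3 := ps18_taylor_comp A (C (ζ ^ d ^ t) * iterComp A t)
            (rescale ζ (iterComp A t) - C (ζ ^ d ^ t) * iterComp A t)
            (fun j hj => hWlow j (by omega)) (fun j hj => hWhlow j (by omega))
          have e4 : comp A (C (ζ ^ d ^ t) * iterComp A t)
              = comp (rescale (ζ ^ d ^ t) A) (iterComp A t) :=
            ps18_comp_C_mul_right _ _ _
          have e5 : comp (rescale (ζ ^ d ^ t) A) (iterComp A t)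
              = C ((ζ ^ d ^ t) ^ d) * comp A (iterComp A t)
                + comp (rescale (ζ ^ d ^ t) A - C ((ζ ^ d ^ t) ^ d) * A)
                    (iterComp A t) := by
            rw [← ps18_comp_C_mul_left, ← ps18_comp_add_left]
            congr 1
            ring
          have e6 : (ζ ^ d ^ t) ^ d = ζ ^ d ^ (t + 1) := by
            rw [← pow_mul, ← pow_succ]
          rw [e1, e2, e3, e4, e5, e6]
          ring
        -- lower bound for the composition term
        have hΔ'low : ∀ i < n₀,
            coeff i (rescale (ζ ^ d ^ t) A - C ((ζ ^ d ^ t) ^ d) * A) = 0 := by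
          intro i hi
          rw [map_sub, coeff_rescale, coeff_C_mul]
          by_cases hai : coeff i A = 0
          · rw [hai, mul_zero, mul_zero, sub_self]
          · have hz := hF0 i hi hai
            have : (ζ ^ d ^ t) ^ i = (ζ ^ d ^ t) ^ d := by
              rw [pow_right_comm, hz, pow_right_comm]
            rw [this, sub_self]
        have harith1 : p + d ^ (t + 1) < n₀ * d ^ t := by
          have e : n₀ * d ^ t = d * d ^ t + p * d ^ t := by rw [hn₀eq, Nat.add_mul]
          have h1 : p * 2 ≤ p * d ^ t := Nat.mul_le_mul_left p h2t
          have e2 : d ^ (t + 1) = d * d ^ t := by rw [pow_succ']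
          rw [e, e2]
          linarith
        have hlowpiece1 : ∀ i ≤ p + d ^ (t + 1),
            coeff i (comp (rescale (ζ ^ d ^ t) A - C ((ζ ^ d ^ t) ^ d) * A)
              (iterComp A t)) = 0 :=
          fun i hi => ps18_coeff_comp_of_lt hΔ'low hitlow (lt_of_le_of_lt hi harith1)
        have harith2 : (p + d ^ t) + (d - 1) * d ^ t = p + d ^ (t + 1) := by
          have e2 : d ^ (t + 1) = d * d ^ t := by rw [pow_succ']
          have e3 : d ^ t + (d - 1) * d ^ t = d * d ^ t := by
            have : 1 * d ^ t + (d - 1) * d ^ t = d * d ^ t := by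
              rw [← Nat.add_mul]
              congr 1
              omega
            rw [one_mul] at this
            exact this
          rw [e2]
          omega
        have hQlow : ∀ j < (d - 1) * d ^ t,
            coeff j (ps18Qser A (C (ζ ^ d ^ t) * iterComp A t)
              (rescale ζ (iterComp A t) - C (ζ ^ d ^ t) * iterComp A t)) = 0 :=
          fun j hj => ps18_Qser_coeff_of_lt hlow hWlow hWhlow hj
        have hlowpiece2 : ∀ i < p + d ^ (t + 1),
            coeff i ((rescale ζ (iterComp A t) - C (ζ ^ d ^ t) * iterComp A t) *
              ps18Qser A (C (ζ ^ d ^ t) * iterComp A t)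
                (rescale ζ (iterComp A t) - C (ζ ^ d ^ t) * iterComp A t)) = 0 := by
          intro i hi
          exact ps18_coeff_mul_of_lt IH.1 hQlow (by omega)
        have hl : coeff (d ^ t) (C (ζ ^ d ^ t) * iterComp A t +
              (rescale ζ (iterComp A t) - C (ζ ^ d ^ t) * iterComp A t))
            = coeff (d ^ t) (C (ζ ^ d ^ t) * iterComp A t) := by
          rw [hWD, coeff_rescale, coeff_C_mul]
        have hleadQ := ps18_Qser_lead (o := d ^ t) (d := d) (by omega) (by omega)
          hlow hWlow hWhlow hl
        have hQne : coeff ((d - 1) * d ^ t)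
            (ps18Qser A (C (ζ ^ d ^ t) * iterComp A t)
              (rescale ζ (iterComp A t) - C (ζ ^ d ^ t) * iterComp A t)) ≠ 0 := by
          rw [hleadQ, coeff_C_mul]
          refine mul_ne_zero (Nat.cast_ne_zero.2 (by omega)) ?_
          refine mul_ne_zero had (pow_ne_zero _ ?_)
          exact mul_ne_zero (pow_ne_zero _ hζ0) hitne
        have hleadpiece2 : coeff (p + d ^ (t + 1))
            ((rescale ζ (iterComp A t) - C (ζ ^ d ^ t) * iterComp A t) *
              ps18Qser A (C (ζ ^ d ^ t) * iterComp A t)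
                (rescale ζ (iterComp A t) - C (ζ ^ d ^ t) * iterComp A t)) ≠ 0 := by
          rw [← harith2, ps18_coeff_mul_of_eq IH.1 hQlow]
          exact mul_ne_zero IH.2 hQne
        constructor
        · intro i hi
          rw [hident, map_add, hlowpiece1 i (le_of_lt hi), hlowpiece2 i hi, add_zero]
        · rw [hident, map_add, hlowpiece1 _ (le_refl _), zero_add]
          exact hleadpiece2
    have hfin := (claim s hs).2
    apply hfin
    have hz : rescale ζ (iterComp A s) - C (ζ ^ d ^ s) * iterComp A s = 0 := by
      rw [hzetaB, ← hzr, sub_self]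
    rw [hz, map_zero]
  -- conclude: the support of A lies in d + mℕ
  have hsuppA : ∀ i, coeff i A ≠ 0 → d ≤ i ∧ m ∣ i - d := by
    intro i hai
    have hdi : d ≤ i := by
      by_contra hx
      exact hai (hlow i (by omega))
    refine ⟨hdi, ?_⟩
    have h1 := congrArg (coeff i) key
    rw [coeff_rescale, coeff_C_mul] at h1
    have hz : ζ ^ i = ζ ^ d := mul_right_cancel₀ hai h1
    have hz1 : ζ ^ (i - d) = 1 := by
      have h2 : ζ ^ (i - d) * ζ ^ d = 1 * ζ ^ d := by
        rw [← pow_add, Nat.sub_add_cancel hdi, hz, one_mul]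
      exact mul_right_cancel₀ (pow_ne_zero _ hζ0) h2
    exact (hζ.pow_eq_one_iff_dvd _).1 hz1
  refine ⟨PowerSeries.mk fun j => coeff (d + m * j) A, d, ?_⟩
  ext N
  rcases lt_or_ge N d with hNd | hNd
  · rw [hlow N hNd]
    symm
    exact ps18_coeff_mul_of_lt (o₁ := d) (o₂ := 0)
      (fun i hi => by rw [PowerSeries.coeff_X_pow, if_neg (by omega)])
      (fun i hi => absurd hi (Nat.not_lt_zero _)) (by omega)
  · have hNe : N = (N - d) + d := by omega
    rw [hNe, PowerSeries.coeff_X_pow_mul,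
      ps18_coeff_comp_Xpow _ (by omega : 1 ≤ m) (N - d)]
    by_cases hdvd : m ∣ N - d
    · rw [if_pos hdvd, coeff_mk]
      have : d + m * ((N - d) / m) = (N - d) + d := by
        rw [Nat.mul_div_cancel' hdvd]
        omega
      rw [this]
    · rw [if_neg hdvd]
      by_contra hne'
      have : coeff ((N - d) + d) A ≠ 0 := fun hcon => hne' (by rw [hcon])
      obtain ⟨_, hdvd'⟩ := hsuppA _ this
      rw [show (N - d) + d - d = N - d by omega] at hdvd'
      exact hdvd hdvd'
end
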